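/- Let $p \geq 1$ and let $m, m'$ be profiles in $\mathbb{N}^{(\mathbb{N}^*)}$ with $m^{[p]} = (m')^{[p]}$. Then there exists a finite sequence of profiles $a^{(0)} = m, a^{(1)}, \dots, a^{(N)} = m'$ such that consecutive profiles are $p$-adjacent: for each $i$, there exist non-negative integers $a, k, l$ with $pa \leq k < l \leq p(a+1)$ and $a^{(i)} - a^{(i+1)} = \pm(e_k + e_l - e_{k+1} - e_{l-1})$. -/

import Mathlib

/-- The indicator profile `e k` (with the convention `e 0 = 0`). -/
noncomputable def eProf (k : ℕ) : ℕ →₀ ℤ := if k = 0 then 0 else Finsupp.single k 1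

/-- The `a`-th entry (`a ≥ 1`) of `m^[p]`:
`∑_{-p < j < p} (p - |j|) m_{p a + j}` (with `m_i = 0` for `i ≤ 0`). -/
noncomputable def profilePow (m : ℕ →₀ ℤ) (p : ℕ) (a : ℕ) : ℤ :=
  ∑ j ∈ Finset.Ioo (-(p : ℤ)) (p : ℤ), ((p : ℤ) - |j|) * m ((p * a + j).toNat)

/-- `m` and `m'` are `p`-adjacent profiles. -/
def PAdjacent (p : ℕ) (m m' : ℕ →₀ ℤ) : Prop :=
  ∃ a k l : ℕ, p * a ≤ k ∧ k < l ∧ l ≤ p * (a + 1) ∧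
    (m - m' = eProf k + eProf l - eProf (k + 1) - eProf (l - 1) ∨
     m' - m = eProf k + eProf l - eProf (k + 1) - eProf (l - 1))

lemma eProf_apply (k t : ℕ) : eProf k t = if k ≠ 0 ∧ t = k then 1 else 0 := by
  unfold eProf
  split_ifs with h1 h2 h3
  · exact absurd h2.1 (by simp [h1])
  · simp
  · rw [Finsupp.single_apply, if_pos h3.2.symm]
  · rw [Finsupp.single_apply, if_neg]
    intro h; exact h3 ⟨h1, h.symm⟩

lemma gmax_zero {p x : ℤ} (h : p ≤ |x|) : max (p - |x|) 0 = 0 :=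
  max_eq_right (by linarith)

lemma gmax_mid {p x : ℤ} (h : |x| ≤ p) : max (p - |x|) 0 = p - |x| :=
  max_eq_left (by linarith)

lemma profilePow_eProf (p t b : ℕ) (hp : 1 ≤ p) (hb : 1 ≤ b) :
    profilePow (eProf t) p b = max ((p : ℤ) - |(t : ℤ) - p * b|) 0 := by
  unfold profilePow
  rcases Nat.eq_zero_or_pos t with rfl | ht
  · rw [gmax_zero (by rw [abs_of_nonpos (by push_cast; nlinarith)]; push_cast; nlinarith)]
    refine Finset.sum_eq_zero fun j hj => ?_
    rw [eProf_apply]; simp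
  · have key : ∀ j ∈ Finset.Ioo (-(p : ℤ)) (p : ℤ),
        ((p : ℤ) - |j|) * (eProf t) ((p * b + j).toNat) =
        if j = (t : ℤ) - p * b then (p : ℤ) - |j| else 0 := by
      intro j hj
      rw [eProf_apply]
      have hc : ((p * b : ℕ) : ℤ) = (p : ℤ) * b := by push_cast; ring
      by_cases hj2 : j = (t : ℤ) - p * b
      · rw [if_pos hj2, if_pos ⟨by omega, by omega⟩]; ring
      · rw [if_neg hj2, if_neg (by intro hh; exact hj2 (by omega))]; ring
    rw [Finset.sum_congr rfl key, Finset.sum_ite_eq' (Finset.Ioo (-(p:ℤ)) p) ((t:ℤ) - p*b)]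
    by_cases h : (t:ℤ) - p*b ∈ Finset.Ioo (-(p:ℤ)) p
    · rw [if_pos h]
      rw [Finset.mem_Ioo] at h
      rw [gmax_mid (by rw [abs_le]; constructor <;> linarith [h.1, h.2])]
    · rw [if_neg h]
      rw [Finset.mem_Ioo, not_and_or] at h
      rw [gmax_zero ?_]
      rcases h with h | h
      · rw [abs_of_nonpos (by linarith [not_lt.mp h])]; linarith [not_lt.mp h]
      · rw [abs_of_nonneg (by linarith [not_lt.mp h])]; exact not_lt.mp h

lemma four_point (p a b K L : ℤ) (hp : 1 ≤ p) (hb : 1 ≤ b) (ha : 0 ≤ a)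
    (h1 : p * a ≤ K) (h2 : K < L) (h3 : L ≤ p * a + p) :
    max (p - |K - p * b|) 0 + max (p - |L - p * b|) 0 =
    max (p - |(K + 1) - p * b|) 0 + max (p - |(L - 1) - p * b|) 0 := by
  rcases lt_trichotomy b a with hba | hba | hba
  · -- b ≤ a - 1, p*b ≤ p*a - p
    have hpb : p * b ≤ p * a - p := by
      have : p * (b + 1) ≤ p * a := by
        apply mul_le_mul_of_nonneg_left (by omega) (by omega)
      linarith
    rw [gmax_zero (by rw [abs_of_nonneg (by linarith)]; linarith),
        gmax_zero (by rw [abs_of_nonneg (by linarith)]; linarith),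
        gmax_zero (by rw [abs_of_nonneg (by linarith)]; linarith),
        gmax_zero (by rw [abs_of_nonneg (by linarith)]; linarith)]
  · subst hba
    rw [gmax_mid (by rw [abs_of_nonneg (by linarith)]; linarith),
        gmax_mid (by rw [abs_of_nonneg (by linarith)]; linarith),
        gmax_mid (by rw [abs_of_nonneg (by linarith)]; linarith),
        gmax_mid (by rw [abs_of_nonneg (by linarith)]; linarith),
        abs_of_nonneg (by linarith), abs_of_nonneg (by linarith),
        abs_of_nonneg (by linarith), abs_of_nonneg (by linarith)]
    ring
  · rcases eq_or_lt_of_le (by omega : a + 1 ≤ b) with hba2 | hba2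
    · -- b = a + 1 : p * b = p*a + p
      have hpb : p * b = p * a + p := by rw [← hba2]; ring
      rw [gmax_mid (by rw [abs_of_nonpos (by linarith)]; linarith),
          gmax_mid (by rw [abs_of_nonpos (by linarith)]; linarith),
          gmax_mid (by rw [abs_of_nonpos (by linarith)]; linarith),
          gmax_mid (by rw [abs_of_nonpos (by linarith)]; linarith),
          abs_of_nonpos (by linarith), abs_of_nonpos (by linarith),
          abs_of_nonpos (by linarith), abs_of_nonpos (by linarith)]
      ring
    · -- b ≥ a + 2 : p*b ≥ p*a + 2p
      have hpb : p * a + 2 * p ≤ p * b := by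
        have : p * (a + 2) ≤ p * b := by
          apply mul_le_mul_of_nonneg_left (by omega) (by omega)
        linarith
      rw [gmax_zero (by rw [abs_of_nonpos (by linarith)]; linarith),
          gmax_zero (by rw [abs_of_nonpos (by linarith)]; linarith),
          gmax_zero (by rw [abs_of_nonpos (by linarith)]; linarith),
          gmax_zero (by rw [abs_of_nonpos (by linarith)]; linarith)]

def Good (m : ℕ →₀ ℤ) : Prop := m 0 = 0 ∧ ∀ k, 0 ≤ m k

def Chainable (p : ℕ) (m m' : ℕ →₀ ℤ) : Prop :=
  ∃ N : ℕ, ∃ c : ℕ → (ℕ →₀ ℤ),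
    c 0 = m ∧ c N = m' ∧
    (∀ i ≤ N, (c i) 0 = 0 ∧ ∀ k, 0 ≤ (c i) k) ∧
    ∀ i < N, PAdjacent p (c i) (c (i + 1))

lemma PAdjacent.symm' {p : ℕ} {m m' : ℕ →₀ ℤ} (h : PAdjacent p m m') : PAdjacent p m' m := by
  obtain ⟨a, k, l, h1, h2, h3, h4⟩ := h
  exact ⟨a, k, l, h1, h2, h3, h4.symm⟩

lemma Chainable.refl {p : ℕ} {m : ℕ →₀ ℤ} (h : Good m) : Chainable p m m :=
  ⟨0, fun _ => m, rfl, rfl, fun _ _ => ⟨h.1, h.2⟩, fun i hi => absurd hi (by omega)⟩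

lemma Chainable.symm {p : ℕ} {m m' : ℕ →₀ ℤ} (h : Chainable p m m') : Chainable p m' m := by
  obtain ⟨N, c, h0, hN, hg, ha⟩ := h
  refine ⟨N, fun i => c (N - i), by simpa, by simpa, fun i hi => hg _ (by omega), fun i hi => ?_⟩
  have h1 : N - i = (N - (i+1)) + 1 := by omega
  have := (ha (N - (i+1)) (by omega)).symm'
  rwa [← h1] at this

lemma Chainable.trans {p : ℕ} {m n m' : ℕ →₀ ℤ} (h : Chainable p m n) (h' : Chainable p n m') :
    Chainable p m m' := by
  obtain ⟨N, c, h0, hN, hg, ha⟩ := h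
  obtain ⟨N', c', h0', hN', hg', ha'⟩ := h'
  refine ⟨N + N', fun i => if i ≤ N then c i else c' (i - N), by simp [h0], ?_, ?_, ?_⟩
  · show (if N + N' ≤ N then c (N + N') else c' (N + N' - N)) = m'
    by_cases hle : N + N' ≤ N
    · have hN'0 : N' = 0 := by omega
      rw [if_pos hle, show N + N' = N by omega, hN, ← h0', show (0:ℕ) = N' by omega, hN']
    · rw [if_neg hle, show N + N' - N = N' by omega, hN']
  · intro i hi
    show (if i ≤ N then c i else c' (i - N)) 0 = 0 ∧ ∀ k, 0 ≤ (if i ≤ N then c i else c' (i - N)) k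
    by_cases hle : i ≤ N
    · simpa [hle] using hg i hle
    · simp only [if_neg hle]
      exact hg' (i - N) (by omega)
  · intro i hi
    show PAdjacent p (if i ≤ N then c i else c' (i - N))
      (if i + 1 ≤ N then c (i + 1) else c' (i + 1 - N))
    by_cases h1 : i + 1 ≤ N
    · rw [if_pos (by omega : i ≤ N), if_pos h1]
      exact ha i (by omega)
    · by_cases h2 : i ≤ N
      · have hiN : i = N := by omega
        rw [if_pos h2, if_neg h1, hiN, hN, ← h0', show N + 1 - N = 1 by omega]
        exact ha' 0 (by omega)
      · rw [if_neg h2, if_neg h1, show i + 1 - N = (i - N) + 1 by omega]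
        exact ha' (i - N) (by omega)

lemma Chainable.single {p : ℕ} {m m' : ℕ →₀ ℤ} (hm : Good m) (hm' : Good m')
    (h : PAdjacent p m m') : Chainable p m m' := by
  refine ⟨1, fun i => if i = 0 then m else m', rfl, rfl, fun i _ => ?_, fun i hi => ?_⟩
  · by_cases h0 : i = 0 <;> simp [h0, hm.1, hm.2, hm'.1, hm'.2]
  · have : i = 0 := by omega
    simpa [this] using h

lemma profilePow_add (u v : ℕ →₀ ℤ) (p a : ℕ) :
    profilePow (u + v) p a = profilePow u p a + profilePow v p a := by
  unfold profilePow
  rw [← Finset.sum_add_distrib]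
  refine Finset.sum_congr rfl fun j _ => by
    rw [Finsupp.add_apply]; ring

lemma profilePow_sub (u v : ℕ →₀ ℤ) (p a : ℕ) :
    profilePow (u - v) p a = profilePow u p a - profilePow v p a := by
  unfold profilePow
  rw [← Finset.sum_sub_distrib]
  refine Finset.sum_congr rfl fun j _ => by
    rw [Finsupp.sub_apply]; ring

/- size and potential -/

def SizeZ (m : ℕ →₀ ℤ) : ℤ := m.sum fun k v => (k : ℤ) * v
def PhiZ (m : ℕ →₀ ℤ) : ℤ := m.sum fun k v => (k : ℤ) ^ 2 * v

lemma SizeZ_add (u v : ℕ →₀ ℤ) : SizeZ (u + v) = SizeZ u + SizeZ v :=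
  Finsupp.sum_add_index' (fun _ => mul_zero _) (fun _ _ _ => mul_add _ _ _)

lemma SizeZ_sub (u v : ℕ →₀ ℤ) : SizeZ (u - v) = SizeZ u - SizeZ v :=
  Finsupp.sum_sub_index (fun _ _ _ => mul_sub _ _ _)

lemma PhiZ_add (u v : ℕ →₀ ℤ) : PhiZ (u + v) = PhiZ u + PhiZ v :=
  Finsupp.sum_add_index' (fun _ => mul_zero _) (fun _ _ _ => mul_add _ _ _)

lemma PhiZ_sub (u v : ℕ →₀ ℤ) : PhiZ (u - v) = PhiZ u - PhiZ v :=
  Finsupp.sum_sub_index (fun _ _ _ => mul_sub _ _ _)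

lemma SizeZ_def (m : ℕ →₀ ℤ) : SizeZ m = ∑ k ∈ m.support, (k : ℤ) * m k := rfl
lemma PhiZ_def (m : ℕ →₀ ℤ) : PhiZ m = ∑ k ∈ m.support, (k : ℤ) ^ 2 * m k := rfl

lemma SizeZ_eProf (t : ℕ) : SizeZ (eProf t) = t := by
  unfold SizeZ eProf
  split_ifs with h
  · simp [h]
  · simp [Finsupp.sum_single_index]

lemma PhiZ_eProf (t : ℕ) : PhiZ (eProf t) = (t : ℤ) ^ 2 := by
  unfold PhiZ eProf
  split_ifs with h
  · simp [h]
  · simp [Finsupp.sum_single_index]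

lemma SizeZ_nonneg {m : ℕ →₀ ℤ} (hm : Good m) : 0 ≤ SizeZ m := by
  rw [SizeZ_def]
  exact Finset.sum_nonneg fun k _ => mul_nonneg (by positivity) (hm.2 k)

lemma le_SizeZ_of_mem {m : ℕ →₀ ℤ} (hm : Good m) {k : ℕ} (hk : k ∈ m.support) :
    (k : ℤ) ≤ SizeZ m := by
  have h1 : 1 ≤ m k := by
    have := hm.2 k
    have := Finsupp.mem_support_iff.mp hk
    omega
  rw [SizeZ_def]
  calc (k : ℤ) ≤ (k : ℤ) * m k := by nlinarith [Int.natCast_nonneg k]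
  _ ≤ _ := Finset.single_le_sum
      (f := fun (i : ℕ) => (i : ℤ) * m i) (fun i _ => mul_nonneg (by positivity) (hm.2 i)) hk

lemma PhiZ_le_sq {m : ℕ →₀ ℤ} (hm : Good m) : PhiZ m ≤ SizeZ m ^ 2 := by
  rw [pow_two, PhiZ_def]
  calc ∑ k ∈ m.support, (k : ℤ) ^ 2 * m k
      ≤ ∑ k ∈ m.support, SizeZ m * ((k : ℤ) * m k) := by
        refine Finset.sum_le_sum fun k hk => ?_
        have h2 := le_SizeZ_of_mem hm hk
        have h4 : (0:ℤ) ≤ (k : ℤ) * m k := mul_nonneg (by positivity) (hm.2 k)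
        calc (k : ℤ) ^ 2 * m k = (k : ℤ) * ((k:ℤ) * m k) := by ring
        _ ≤ SizeZ m * ((k:ℤ) * m k) := mul_le_mul_of_nonneg_right h2 h4
    _ = SizeZ m * SizeZ m := by rw [← Finset.mul_sum, ← SizeZ_def]

/- the spreading move -/

lemma move_lemma (p a x y : ℕ) (hp : 1 ≤ p) (m : ℕ →₀ ℤ) (hg : Good m)
    (hx : p * a < x) (hxy : x ≤ y) (hy : y < p * a + p)
    (hcase : (x < y ∧ 1 ≤ m x ∧ 1 ≤ m y) ∨ (x = y ∧ 2 ≤ m x)) :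
    ∃ m₁ : ℕ →₀ ℤ, Good m₁ ∧ PAdjacent p m m₁ ∧
      (∀ b : ℕ, 1 ≤ b → profilePow m₁ p b = profilePow m p b) ∧
      SizeZ m₁ = SizeZ m ∧ PhiZ m + 2 ≤ PhiZ m₁ := by
  have hx1 : 1 ≤ x := by omega
  set m₁ : ℕ →₀ ℤ := m + eProf (x - 1) + eProf (y + 1) - eProf x - eProf y with hm₁
  have happ : ∀ t, m₁ t = m t + eProf (x-1) t + eProf (y+1) t - eProf x t - eProf y t := by
    intro t
    rw [hm₁]
    simp [Finsupp.add_apply, Finsupp.sub_apply]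
  have hgood : Good m₁ := by
    constructor
    · rw [happ 0, hg.1]
      simp only [eProf_apply]
      split_ifs <;> first | omega | simp_all
    · intro t
      have h0 := hg.2 t
      rcases hcase with ⟨h1, h2, h3⟩ | ⟨h1, h2⟩
      · rcases eq_or_ne t x with rfl | tx
        · rw [happ]; simp only [eProf_apply]; split_ifs <;> first | omega | simp_all
        · rcases eq_or_ne t y with rfl | ty
          · rw [happ]; simp only [eProf_apply]; split_ifs <;> first | omega | simp_all
          · rw [happ]; simp only [eProf_apply]; split_ifs <;> first | omega | simp_all
      · subst h1
        rcases eq_or_ne t x with rfl | tx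
        · rw [happ]; simp only [eProf_apply]; split_ifs <;> first | omega | simp_all
        · rw [happ]; simp only [eProf_apply]; split_ifs <;> first | omega | simp_all
  have hadj : PAdjacent p m m₁ := by
    have hpa : p * (a + 1) = p * a + p := by ring
    refine ⟨a, x - 1, y + 1, by omega, by omega, by omega, Or.inr ?_⟩
    rw [show x - 1 + 1 = x by omega, show y + 1 - 1 = y from rfl, hm₁]
    abel
  have hpow : ∀ b : ℕ, 1 ≤ b → profilePow m₁ p b = profilePow m p b := by
    intro b hb
    rw [hm₁, profilePow_sub, profilePow_sub, profilePow_add, profilePow_add,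
        profilePow_eProf p (x-1) b hp hb, profilePow_eProf p (y+1) b hp hb,
        profilePow_eProf p x b hp hb, profilePow_eProf p y b hp hb]
    have h4 := four_point p a b ((x:ℤ) - 1) ((y:ℤ) + 1) (by exact_mod_cast hp)
      (by exact_mod_cast hb) (Int.natCast_nonneg a)
      (by push_cast; omega) (by push_cast; omega) (by push_cast; omega)
    have e1 : ((x - 1 : ℕ) : ℤ) = (x : ℤ) - 1 := by omega
    have e2 : ((y + 1 : ℕ) : ℤ) = (y : ℤ) + 1 := by push_cast; ring
    have e3 : (x : ℤ) - 1 + 1 = (x : ℤ) := by ring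
    have e4 : (y : ℤ) + 1 - 1 = (y : ℤ) := by ring
    rw [e3, e4] at h4
    rw [e1, e2]
    linarith
  have hsize : SizeZ m₁ = SizeZ m := by
    rw [hm₁, SizeZ_sub, SizeZ_sub, SizeZ_add, SizeZ_add,
        SizeZ_eProf, SizeZ_eProf, SizeZ_eProf, SizeZ_eProf]
    omega
  have hphi : PhiZ m + 2 ≤ PhiZ m₁ := by
    rw [hm₁, PhiZ_sub, PhiZ_sub, PhiZ_add, PhiZ_add,
        PhiZ_eProf, PhiZ_eProf, PhiZ_eProf, PhiZ_eProf]
    have e1 : ((x - 1 : ℕ) : ℤ) = (x : ℤ) - 1 := by omega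
    have e2 : ((y + 1 : ℕ) : ℤ) = (y : ℤ) + 1 := by push_cast; ring
    have hxyz : (x : ℤ) ≤ (y : ℤ) := by exact_mod_cast hxy
    rw [e1, e2]
    nlinarith
  exact ⟨m₁, hgood, hadj, hpow, hsize, hphi⟩

/- maximal profiles -/

def MaxProf (p : ℕ) (m : ℕ →₀ ℤ) : Prop :=
  ∀ a : ℕ, (∑ k ∈ Finset.Ioo (p * a) (p * a + p), m k) ≤ 1

lemma exists_one {s : Finset ℕ} {f : ℕ → ℤ} (hf : ∀ i ∈ s, 0 ≤ f i)
    (h1 : 1 ≤ ∑ i ∈ s, f i) : ∃ x ∈ s, 1 ≤ f x := by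
  by_contra hc
  push_neg at hc
  have : ∑ i ∈ s, f i ≤ 0 := Finset.sum_nonpos fun i hi => by
    have := hf i hi; have := hc i hi; omega
  omega

lemma exists_pair {s : Finset ℕ} {f : ℕ → ℤ} (hf : ∀ i ∈ s, 0 ≤ f i)
    (h2 : 2 ≤ ∑ i ∈ s, f i) :
    ∃ x ∈ s, ∃ y ∈ s, (x < y ∧ 1 ≤ f x ∧ 1 ≤ f y) ∨ (x = y ∧ 2 ≤ f x) := by
  by_cases hbig : ∃ x ∈ s, 2 ≤ f x
  · obtain ⟨x, hx, h⟩ := hbig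
    exact ⟨x, hx, x, hx, Or.inr ⟨rfl, h⟩⟩
  · push_neg at hbig
    obtain ⟨x, hx, hfx⟩ := exists_one hf (by omega)
    have herase : ∑ i ∈ s.erase x, f i = (∑ i ∈ s, f i) - f x := by
      rw [← Finset.sum_erase_add s f hx]; ring
    have h1 : 1 ≤ ∑ i ∈ s.erase x, f i := by
      have := hbig x hx; omega
    obtain ⟨y, hy, hfy⟩ := exists_one (fun i hi => hf i (Finset.mem_of_mem_erase hi)) h1
    have hyx : y ≠ x := Finset.ne_of_mem_erase hy
    have hys : y ∈ s := Finset.mem_of_mem_erase hy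
    rcases lt_or_gt_of_ne hyx with h | h
    · exact ⟨y, hys, x, hx, Or.inl ⟨h, hfy, hfx⟩⟩
    · exact ⟨x, hx, y, hys, Or.inl ⟨h, hfx, hfy⟩⟩

lemma not_maxProf_exists {p : ℕ} {m : ℕ →₀ ℤ} (hg : Good m) (h : ¬ MaxProf p m) :
    ∃ a x y : ℕ, p * a < x ∧ x ≤ y ∧ y < p * a + p ∧
      ((x < y ∧ 1 ≤ m x ∧ 1 ≤ m y) ∨ (x = y ∧ 2 ≤ m x)) := by
  unfold MaxProf at h
  push_neg at h
  obtain ⟨a, ha⟩ := h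
  obtain ⟨x, hxs, y, hys, hcase⟩ := exists_pair (s := Finset.Ioo (p * a) (p * a + p))
    (f := fun i => m i) (fun i _ => hg.2 i) (by show 2 ≤ ∑ k ∈ Finset.Ioo (p * a) (p * a + p), m k; omega)
  rw [Finset.mem_Ioo] at hxs hys
  rcases hcase with ⟨h1, h2, h3⟩ | ⟨h1, h2⟩
  · exact ⟨a, x, y, hxs.1, le_of_lt h1, hys.2, Or.inl ⟨h1, h2, h3⟩⟩
  · exact ⟨a, x, y, hxs.1, le_of_eq h1, hys.2, Or.inr ⟨h1, h2⟩⟩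

/- descent to a maximal profile -/

lemma to_max (p : ℕ) (hp : 1 ≤ p) : ∀ μ : ℕ, ∀ m : ℕ →₀ ℤ, Good m →
    (SizeZ m) ^ 2 - PhiZ m ≤ (μ : ℤ) →
    ∃ n, Good n ∧ MaxProf p n ∧ Chainable p m n ∧
      ∀ b, 1 ≤ b → profilePow n p b = profilePow m p b := by
  intro μ
  induction μ with
  | zero =>
    intro m hg hμ
    refine ⟨m, hg, ?_, Chainable.refl hg, fun b _ => rfl⟩
    by_contra hmax
    obtain ⟨a, x, y, h1, h2, h3, h4⟩ := not_maxProf_exists hg hmax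
    obtain ⟨m₁, hg1, _, _, hs, hph⟩ := move_lemma p a x y hp m hg h1 h2 h3 h4
    have hb := PhiZ_le_sq hg1
    rw [hs] at hb
    simp only [Nat.cast_zero] at hμ
    linarith
  | succ μ ih =>
    intro m hg hμ
    by_cases hmax : MaxProf p m
    · exact ⟨m, hg, hmax, Chainable.refl hg, fun _ _ => rfl⟩
    · obtain ⟨a, x, y, h1, h2, h3, h4⟩ := not_maxProf_exists hg hmax
      obtain ⟨m₁, hg1, hadj, hpowm, hs, hph⟩ := move_lemma p a x y hp m hg h1 h2 h3 h4
      have hle : (SizeZ m₁) ^ 2 - PhiZ m₁ ≤ (μ : ℤ) := by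
        rw [hs]; push_cast at hμ ⊢; linarith
      obtain ⟨n, hgn, hmaxn, hchain, hpow⟩ := ih m₁ hg1 hle
      exact ⟨n, hgn, hmaxn, (Chainable.single hg hg1 hadj).trans hchain,
        fun b hb => (hpow b hb).trans (hpowm b hb)⟩

/- decomposition of profilePow over natural positions -/

lemma profilePow_reindex (p c : ℕ) (hp : 1 ≤ p) (m : ℕ →₀ ℤ) :
    profilePow m p (c + 1) =
      ∑ t ∈ Finset.Ioo (p * c) (p * c + 2 * p),
        ((p : ℤ) - |(t : ℤ) - p * (c + 1)|) * m t := by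
  unfold profilePow
  refine Finset.sum_nbij' (fun j => ((p : ℤ) * (c + 1 : ℕ) + j).toNat)
    (fun t => (t : ℤ) - (p : ℤ) * ((c : ℤ) + 1)) ?_ ?_ ?_ ?_ ?_
  · intro j hj
    rw [Finset.mem_Ioo] at hj ⊢
    push_cast at hj ⊢
    have hq : (p:ℤ) * ((c:ℤ)+1) = (p:ℤ)*(c:ℤ) + (p:ℤ) := by ring
    omega
  · intro t ht
    rw [Finset.mem_Ioo] at ht ⊢
    push_cast at ht ⊢
    have hq : (p:ℤ) * ((c:ℤ)+1) = (p:ℤ)*(c:ℤ) + (p:ℤ) := by ring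
    omega
  · intro j hj
    rw [Finset.mem_Ioo] at hj
    have hnn : (0 : ℤ) ≤ (p : ℤ) * (c + 1 : ℕ) + j := by
      push_cast at hj ⊢; nlinarith
    show ((((p : ℤ) * (c + 1 : ℕ) + j).toNat : ℤ)) - (p : ℤ) * ((c : ℤ) + 1) = j
    rw [Int.toNat_of_nonneg hnn]
    push_cast
    ring
  · intro t ht
    rw [Finset.mem_Ioo] at ht
    push_cast at ht ⊢
    have hq : (p:ℤ) * ((c:ℤ)+1) = (p:ℤ)*(c:ℤ) + (p:ℤ) := by ring
    omega
  · intro j hj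
    rw [Finset.mem_Ioo] at hj
    have hnn : (0 : ℤ) ≤ (p : ℤ) * (c + 1 : ℕ) + j := by push_cast at hj ⊢; nlinarith
    have hc : ((((p : ℤ) * (c + 1 : ℕ) + j).toNat : ℤ)) = (p : ℤ) * (c + 1 : ℕ) + j :=
      Int.toNat_of_nonneg hnn
    rw [hc]
    have : (p : ℤ) * ((c : ℕ) + 1 : ℕ) + j - (p : ℤ) * ((c : ℕ) + 1) = j := by push_cast; ring
    rw [this]

lemma profilePow_decomp (p c : ℕ) (hp : 1 ≤ p) (m : ℕ →₀ ℤ) :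
    profilePow m p (c + 1) =
      (∑ t ∈ Finset.Ioo (p * c) (p * c + p), ((t : ℤ) - p * c) * m t)
      + p * m (p * c + p)
      + ∑ t ∈ Finset.Ioo (p * c + p) (p * c + 2 * p), ((p : ℤ) * c + 2 * p - t) * m t := by
  rw [profilePow_reindex p c hp m]
  have hsplit : Finset.Ioo (p * c) (p * c + 2 * p) =
      (Finset.Ioo (p * c) (p * c + p) ∪ {p * c + p}) ∪ Finset.Ioo (p * c + p) (p * c + 2 * p) := by
    ext t
    simp only [Finset.mem_union, Finset.mem_Ioo, Finset.mem_singleton]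
    omega
  have hd1 : Disjoint (Finset.Ioo (p * c) (p * c + p)) ({p * c + p} : Finset ℕ) := by
    rw [Finset.disjoint_left]
    intro t ht ht'
    rw [Finset.mem_Ioo] at ht
    rw [Finset.mem_singleton] at ht'
    omega
  have hd2 : Disjoint (Finset.Ioo (p * c) (p * c + p) ∪ {p * c + p})
      (Finset.Ioo (p * c + p) (p * c + 2 * p)) := by
    rw [Finset.disjoint_left]
    intro t ht ht'
    rw [Finset.mem_union, Finset.mem_Ioo, Finset.mem_singleton] at ht
    rw [Finset.mem_Ioo] at ht'
    omega
  rw [hsplit, Finset.sum_union hd2, Finset.sum_union hd1, Finset.sum_singleton]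
  have e1 : ∀ t ∈ Finset.Ioo (p * c) (p * c + p),
      ((p : ℤ) - |(t : ℤ) - p * (c + 1)|) * m t = ((t : ℤ) - p * c) * m t := by
    intro t ht
    rw [Finset.mem_Ioo] at ht
    have hb1 : ((p * c : ℕ) : ℤ) < t := by exact_mod_cast ht.1
    have hb2 : (t : ℤ) < ((p * c + p : ℕ) : ℤ) := by exact_mod_cast ht.2
    push_cast at hb1 hb2
    have habs : |(t : ℤ) - (p : ℤ) * ((c : ℤ) + 1)| = (p : ℤ) * ((c : ℤ) + 1) - t := by
      rw [abs_of_nonpos (by nlinarith)]; ring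
    push_cast [habs]
    ring
  have e2 : ((p : ℤ) - |((p * c + p : ℕ) : ℤ) - (p : ℤ) * ((c : ℕ) + 1 : ℤ)|) * m (p * c + p)
      = (p : ℤ) * m (p * c + p) := by
    have : ((p * c + p : ℕ) : ℤ) - (p : ℤ) * ((c : ℕ) + 1 : ℤ) = 0 := by push_cast; ring
    rw [this, abs_zero, sub_zero]
  have e3 : ∀ t ∈ Finset.Ioo (p * c + p) (p * c + 2 * p),
      ((p : ℤ) - |(t : ℤ) - p * (c + 1)|) * m t = ((p : ℤ) * c + 2 * p - t) * m t := by
    intro t ht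
    rw [Finset.mem_Ioo] at ht
    have hb1 : ((p * c + p : ℕ) : ℤ) < t := by exact_mod_cast ht.1
    have hb2 : (t : ℤ) < ((p * c + 2 * p : ℕ) : ℤ) := by exact_mod_cast ht.2
    push_cast at hb1 hb2
    have habs : |(t : ℤ) - (p : ℤ) * ((c : ℤ) + 1)| = t - (p : ℤ) * ((c : ℤ) + 1) := by
      rw [abs_of_nonneg (by nlinarith)]
    push_cast [habs]
    ring
  rw [Finset.sum_congr rfl e1, Finset.sum_congr rfl e3, e2]

/- uniqueness of maximal profiles -/

lemma weighted_eval {s : Finset ℕ} {w m : ℕ → ℤ} (hm : ∀ k ∈ s, 0 ≤ m k)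
    (hm1 : ∑ k ∈ s, m k ≤ 1) {t : ℕ} (ht : t ∈ s) (h1 : 1 ≤ m t) :
    ∑ u ∈ s, w u * m u = w t := by
  have hz : ∀ u ∈ s, u ≠ t → m u = 0 := by
    intro u hu hne
    have h2 : m u ≤ ∑ k ∈ s.erase t, m k :=
      Finset.single_le_sum (fun i hi => hm i (Finset.mem_of_mem_erase hi))
        (Finset.mem_erase.mpr ⟨hne, hu⟩)
    have h3 : ∑ k ∈ s.erase t, m k = (∑ k ∈ s, m k) - m t := by
      rw [← Finset.sum_erase_add s _ ht]; ring
    have := hm u hu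
    omega
  have hmt : m t = 1 := by
    have h2 : m t ≤ ∑ k ∈ s, m k := Finset.single_le_sum hm ht
    omega
  rw [Finset.sum_eq_single_of_mem t ht (fun u hu hne => by rw [hz u hu hne, mul_zero]),
    hmt, mul_one]

lemma weighted_le {s : Finset ℕ} {w m n : ℕ → ℤ} (hw : ∀ t ∈ s, 0 < w t)
    (hwinj : ∀ t ∈ s, ∀ u ∈ s, w t = w u → t = u)
    (hm : ∀ k ∈ s, 0 ≤ m k) (hn : ∀ k ∈ s, 0 ≤ n k)
    (hm1 : ∑ k ∈ s, m k ≤ 1) (hn1 : ∑ k ∈ s, n k ≤ 1)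
    (hsum : ∑ u ∈ s, w u * m u = ∑ u ∈ s, w u * n u)
    {t : ℕ} (ht : t ∈ s) (h1 : 1 ≤ m t) : 1 ≤ n t := by
  have hevm := weighted_eval (w := w) hm hm1 ht h1
  have hpos : 0 < ∑ u ∈ s, w u * n u := by rw [← hsum, hevm]; exact hw t ht
  have hex : ∃ u ∈ s, 1 ≤ n u := by
    by_contra hc
    push_neg at hc
    have : ∑ u ∈ s, w u * n u = 0 := Finset.sum_eq_zero fun u hu => by
      have h5 := hn u hu
      have h6 := hc u hu
      have : n u = 0 := by omega
      rw [this, mul_zero]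
    omega
  obtain ⟨u, hu, h1u⟩ := hex
  have hevn := weighted_eval (w := w) hn hn1 hu h1u
  have hwu : w u = w t := by rw [← hevn, ← hsum, hevm]
  have := hwinj u hu t ht hwu
  subst this
  exact h1u

lemma weighted_unique {s : Finset ℕ} {w m n : ℕ → ℤ} (hw : ∀ t ∈ s, 0 < w t)
    (hwinj : ∀ t ∈ s, ∀ u ∈ s, w t = w u → t = u)
    (hm : ∀ k ∈ s, 0 ≤ m k) (hn : ∀ k ∈ s, 0 ≤ n k)
    (hm1 : ∑ k ∈ s, m k ≤ 1) (hn1 : ∑ k ∈ s, n k ≤ 1)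
    (hsum : ∑ u ∈ s, w u * m u = ∑ u ∈ s, w u * n u) :
    ∀ t ∈ s, m t = n t := by
  intro t ht
  have hmb : m t ≤ 1 := le_trans (Finset.single_le_sum hm ht) hm1
  have hnb : n t ≤ 1 := le_trans (Finset.single_le_sum hn ht) hn1
  have hm0 := hm t ht
  have hn0 := hn t ht
  by_cases h1 : 1 ≤ m t
  · have := weighted_le hw hwinj hm hn hm1 hn1 hsum ht h1
    omega
  · by_cases h2 : 1 ≤ n t
    · have := weighted_le hw hwinj hn hm hn1 hm1 hsum.symm ht h2
      omega
    · omega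

lemma max_unique_step (p c : ℕ) (hp : 1 ≤ p) (m n : ℕ →₀ ℤ)
    (hgm : Good m) (hgn : Good n) (hm : MaxProf p m) (hn : MaxProf p n)
    (hpow : profilePow m p (c + 1) = profilePow n p (c + 1))
    (hIH : ∀ t, p * (c + 1) < t → m t = n t) :
    ∀ t, p * c < t → m t = n t := by
  have hpc1 : p * (c + 1) = p * c + p := by ring
  -- the three pieces
  have hγ : (∑ t ∈ Finset.Ioo (p * c + p) (p * c + 2 * p), ((p : ℤ) * c + 2 * p - t) * m t)
      = ∑ t ∈ Finset.Ioo (p * c + p) (p * c + 2 * p), ((p : ℤ) * c + 2 * p - t) * n t := by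
    refine Finset.sum_congr rfl fun t ht => ?_
    rw [Finset.mem_Ioo] at ht
    rw [hIH t (by omega)]
  have hdm := profilePow_decomp p c hp m
  have hdn := profilePow_decomp p c hp n
  set αm := ∑ t ∈ Finset.Ioo (p * c) (p * c + p), ((t : ℤ) - p * c) * m t with hαm
  set αn := ∑ t ∈ Finset.Ioo (p * c) (p * c + p), ((t : ℤ) - p * c) * n t with hαn
  have hkey : αm + p * m (p * c + p) = αn + p * n (p * c + p) := by
    rw [hdm, hdn, hγ] at hpow
    linarith
  -- bounds on the α's
  have hbounds : ∀ q : ℕ →₀ ℤ, Good q → MaxProf p q →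
      0 ≤ (∑ t ∈ Finset.Ioo (p * c) (p * c + p), ((t : ℤ) - p * c) * q t) ∧
      (∑ t ∈ Finset.Ioo (p * c) (p * c + p), ((t : ℤ) - p * c) * q t) ≤ (p : ℤ) - 1 := by
    intro q hgq hq
    constructor
    · refine Finset.sum_nonneg fun t ht => ?_
      rw [Finset.mem_Ioo] at ht
      exact mul_nonneg (by push_cast; omega) (hgq.2 t)
    · calc (∑ t ∈ Finset.Ioo (p * c) (p * c + p), ((t : ℤ) - p * c) * q t)
          ≤ ∑ t ∈ Finset.Ioo (p * c) (p * c + p), ((p : ℤ) - 1) * q t := by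
            refine Finset.sum_le_sum fun t ht => ?_
            rw [Finset.mem_Ioo] at ht
            exact mul_le_mul_of_nonneg_right (by push_cast; omega) (hgq.2 t)
      _ = ((p : ℤ) - 1) * ∑ t ∈ Finset.Ioo (p * c) (p * c + p), q t := by
            rw [Finset.mul_sum]
      _ ≤ ((p : ℤ) - 1) * 1 := by
            refine mul_le_mul_of_nonneg_left (hq c) (by push_cast; omega)
      _ = (p : ℤ) - 1 := by ring
  obtain ⟨hm0, hm1⟩ := hbounds m hgm hm
  obtain ⟨hn0, hn1⟩ := hbounds n hgn hn
  rw [← hαm] at hm0 hm1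
  rw [← hαn] at hn0 hn1
  -- conclude equality of α's and of the boundary value
  have hd : m (p * c + p) = n (p * c + p) ∧ αm = αn := by
    set d := m (p * c + p) - n (p * c + p) with hdd
    have h6' : (p : ℤ) * d = (p:ℤ) * m (p * c + p) - (p:ℤ) * n (p * c + p) := by
      rw [hdd]; ring
    have h6 : (p : ℤ) * d = αn - αm := by linarith
    have hp' : (1 : ℤ) ≤ p := by exact_mod_cast hp
    have hd0 : d = 0 := by
      rcases lt_trichotomy d 0 with h | h | h
      · nlinarith
      · exact h
      · nlinarith
    constructor
    · omega
    · rw [hd0] at h6; linarith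
  -- interior equality
  have hint : ∀ t ∈ Finset.Ioo (p * c) (p * c + p), m t = n t := by
    refine weighted_unique (w := fun t => (t : ℤ) - p * c) ?_ ?_
      (fun k _ => hgm.2 k) (fun k _ => hgn.2 k) (hm c) (hn c) ?_
    · intro t ht
      rw [Finset.mem_Ioo] at ht
      push_cast
      omega
    · intro t ht u hu hw
      rw [Finset.mem_Ioo] at ht hu
      have hw' : (t : ℤ) - (p:ℤ) * (c:ℤ) = (u : ℤ) - (p:ℤ) * (c:ℤ) := hw
      omega
    · rw [← hαm, ← hαn]; exact hd.2
  intro t ht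
  by_cases h2 : p * (c + 1) < t
  · exact hIH t h2
  · by_cases h3 : t = p * c + p
    · rw [h3]; exact hd.1
    · exact hint t (Finset.mem_Ioo.mpr ⟨ht, by omega⟩)

lemma max_unique (p : ℕ) (hp : 1 ≤ p) (m n : ℕ →₀ ℤ)
    (hgm : Good m) (hgn : Good n) (hm : MaxProf p m) (hn : MaxProf p n)
    (hpow : ∀ b, 1 ≤ b → profilePow m p b = profilePow n p b) : m = n := by
  -- a bound beyond which both vanish
  obtain ⟨A, hA⟩ : ∃ A : ℕ, ∀ t, p * A < t → m t = 0 ∧ n t = 0 := by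
    refine ⟨(m.support ∪ n.support).sup id + 1, fun t ht => ?_⟩
    have hb : p * ((m.support ∪ n.support).sup id + 1) ≥ (m.support ∪ n.support).sup id + 1 :=
      Nat.le_mul_of_pos_left _ (by omega)
    constructor
    · by_contra h
      have hmem : t ∈ m.support ∪ n.support :=
        Finset.mem_union_left _ (Finsupp.mem_support_iff.mpr h)
      have := Finset.le_sup (f := id) hmem
      simp only [id] at this
      omega
    · by_contra h
      have hmem : t ∈ m.support ∪ n.support :=
        Finset.mem_union_right _ (Finsupp.mem_support_iff.mpr h)
      have := Finset.le_sup (f := id) hmem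
      simp only [id] at this
      omega
  have desc : ∀ i : ℕ, ∀ t, p * (A - i) < t → m t = n t := by
    intro i
    induction i with
    | zero =>
      intro t ht
      simp only [Nat.sub_zero] at ht
      rw [(hA t ht).1, (hA t ht).2]
    | succ i ih =>
      by_cases hAi : A ≤ i
      · intro t ht
        exact ih t (by rw [show A - i = A - (i+1) by omega]; exact ht)
      · have hrw : A - i = (A - (i + 1)) + 1 := by omega
        rw [hrw] at ih
        exact max_unique_step p (A - (i + 1)) hp m n hgm hgn hm hn
          (hpow (A - (i + 1) + 1) (by omega)) ih
  ext t
  rcases Nat.eq_zero_or_pos t with rfl | ht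
  · rw [hgm.1, hgn.1]
  · have := desc A t
    rw [Nat.sub_self, Nat.mul_zero] at this
    exact this ht

/-- If `m` and `m'` are profiles (finitely supported sequences of non-negative integers
indexed by positive integers) with `m^[p] = m'^[p]`, then there is a finite chain of
profiles from `m` to `m'` whose consecutive terms are `p`-adjacent. -/
theorem stmt16 (p : ℕ) (hp : 1 ≤ p) (m m' : ℕ →₀ ℤ)
    (hm0 : m 0 = 0) (hm'0 : m' 0 = 0)
    (hmnn : ∀ k, 0 ≤ m k) (hm'nn : ∀ k, 0 ≤ m' k)
    (hpow : ∀ a : ℕ, 1 ≤ a → profilePow m p a = profilePow m' p a) :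
    ∃ N : ℕ, ∃ c : ℕ → (ℕ →₀ ℤ),
      c 0 = m ∧ c N = m' ∧
      (∀ i ≤ N, (c i) 0 = 0 ∧ ∀ k, 0 ≤ (c i) k) ∧
      ∀ i < N, PAdjacent p (c i) (c (i + 1)) := by
  have hgm : Good m := ⟨hm0, hmnn⟩
  have hgm' : Good m' := ⟨hm'0, hm'nn⟩
  obtain ⟨n, hgn, hmaxn, hchn, hpn⟩ :=
    to_max p hp ((SizeZ m) ^ 2 - PhiZ m).toNat m hgm (Int.self_le_toNat _)
  obtain ⟨n', hgn', hmaxn', hchn', hpn'⟩ :=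
    to_max p hp ((SizeZ m') ^ 2 - PhiZ m').toNat m' hgm' (Int.self_le_toNat _)
  have heq : n = n' := by
    refine max_unique p hp n n' hgn hgn' hmaxn hmaxn' fun b hb => ?_
    rw [hpn b hb, hpow b hb, ← hpn' b hb]
  have : Chainable p m m' := hchn.trans (heq ▸ hchn'.symm)
  exact this
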